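/- Let Q = {x ∈ ℝ^n : 0 ≤ x ≤ u, Ax ≥ b} be a covering polyhedron with bounds. Then the knapsack-cover closure KC(Q) is a 2-approximation of the aggregation closure 𝒜(Q): for every c ∈ ℝ^n with c ≥ 0, inf{cᵀx : x ∈ KC(Q)} ≥ (1/2)·inf{cᵀx : x ∈ 𝒜(Q)}. -/

import Mathlib

open Finset

/-- Dot product of two vectors in `ℝ^n`. -/
def dotp {n : ℕ} (c x : Fin n → ℝ) : ℝ := ∑ j, c j * x j

/-- A point of `ℝ^n` is integral if all its coordinates are integers. -/
def isIntPt {n : ℕ} (x : Fin n → ℝ) : Prop := ∀ j, ∃ z : ℤ, x j = (z : ℝ)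

/-- The value `sup { cᵀ x : x ∈ S }`, in the extended reals. -/
noncomputable def supVal {n : ℕ} (c : Fin n → ℝ) (S : Set (Fin n → ℝ)) : EReal :=
  ⨆ x ∈ S, ((dotp c x : ℝ) : EReal)

/-- The value `inf { cᵀ x : x ∈ S }`, in the extended reals. -/
noncomputable def infVal {n : ℕ} (c : Fin n → ℝ) (S : Set (Fin n → ℝ)) : EReal :=
  ⨅ x ∈ S, ((dotp c x : ℝ) : EReal)

/-- The polyhedron `{x ≥ 0 : A x ≤ b}`. -/
def packLP {n m : ℕ} (A : Matrix (Fin m) (Fin n) ℝ) (b : Fin m → ℝ) : Set (Fin n → ℝ) :=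
  {x | (∀ j, 0 ≤ x j) ∧ ∀ i, dotp (A i) x ≤ b i}

/-- Aggregation closure of a packing polyhedron. -/
def aggP {n m : ℕ} (A : Matrix (Fin m) (Fin n) ℝ) (b : Fin m → ℝ) : Set (Fin n → ℝ) :=
  ⋂ lam : {l : Fin m → ℝ // ∀ i, 0 ≤ l i},
    convexHull ℝ {x | (∀ j, 0 ≤ x j) ∧ isIntPt x ∧
      dotp (fun j => ∑ i, lam.1 i * A i j) x ≤ ∑ i, lam.1 i * b i}

/-- 1-row aggregation closure of a packing polyhedron. -/
def oneAggP {n m : ℕ} (A : Matrix (Fin m) (Fin n) ℝ) (b : Fin m → ℝ) : Set (Fin n → ℝ) :=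
  ⋂ i : Fin m, convexHull ℝ {x | (∀ j, 0 ≤ x j) ∧ isIntPt x ∧ dotp (A i) x ≤ b i}

/-- Chvátal–Gomory closure of a set `P ⊆ ℝ^n`. -/
def cgClosure {n : ℕ} (P : Set (Fin n → ℝ)) : Set (Fin n → ℝ) :=
  {x | ∀ (c : Fin n → ℤ) (δ : ℝ),
    (∀ y ∈ P, δ ≤ ∑ j, (c j : ℝ) * y j) → ((⌈δ⌉ : ℤ) : ℝ) ≤ ∑ j, (c j : ℝ) * x j}

/-- 1-row CG closure of a packing polyhedron. -/
def oneCGP {n m : ℕ} (A : Matrix (Fin m) (Fin n) ℝ) (b : Fin m → ℝ) : Set (Fin n → ℝ) :=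
  ⋂ i : Fin m, cgClosure {x | (∀ j, 0 ≤ x j) ∧ dotp (A i) x ≤ b i}

/-- Covering polyhedron with bounds `u j` on coordinates `j ∈ J` (coordinates outside `J`
are unbounded above). -/
def coverLP {n m : ℕ} (A : Matrix (Fin m) (Fin n) ℝ) (b : Fin m → ℝ)
    (J : Finset (Fin n)) (u : Fin n → ℝ) : Set (Fin n → ℝ) :=
  {x | (∀ j, 0 ≤ x j) ∧ (∀ j ∈ J, x j ≤ u j) ∧ ∀ i, b i ≤ dotp (A i) x}

/-- Aggregation closure of a covering polyhedron with bounds. -/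
def aggC {n m : ℕ} (A : Matrix (Fin m) (Fin n) ℝ) (b : Fin m → ℝ)
    (J : Finset (Fin n)) (u : Fin n → ℝ) : Set (Fin n → ℝ) :=
  ⋂ lam : {l : Fin m → ℝ // ∀ i, 0 ≤ l i},
    convexHull ℝ {x | (∀ j, 0 ≤ x j) ∧ isIntPt x ∧ (∀ j ∈ J, x j ≤ u j) ∧
      (∑ i, lam.1 i * b i) ≤ dotp (fun j => ∑ i, lam.1 i * A i j) x}

/-- 1-row aggregation closure of a covering polyhedron with bounds. -/
def oneAggC {n m : ℕ} (A : Matrix (Fin m) (Fin n) ℝ) (b : Fin m → ℝ)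
    (J : Finset (Fin n)) (u : Fin n → ℝ) : Set (Fin n → ℝ) :=
  ⋂ i : Fin m, convexHull ℝ
    {x | (∀ j, 0 ≤ x j) ∧ isIntPt x ∧ (∀ j ∈ J, x j ≤ u j) ∧ b i ≤ dotp (A i) x}

/-- 1-row CG closure of a covering polyhedron with bounds. -/
def oneCGC {n m : ℕ} (A : Matrix (Fin m) (Fin n) ℝ) (b : Fin m → ℝ)
    (J : Finset (Fin n)) (u : Fin n → ℝ) : Set (Fin n → ℝ) :=
  ⋂ i : Fin m, cgClosure {x | (∀ j, 0 ≤ x j) ∧ (∀ j ∈ J, x j ≤ u j) ∧ b i ≤ dotp (A i) x}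

/-- The knapsack-cover (KC) closure of a covering polyhedron with bounds: all points of the
polyhedron satisfying, for every row `i` and every `S ⊆ J` with
`r = b i - ∑_{j ∈ S} A i j * u j > 0`, the inequality `∑_{j ∉ S} min(A i j, r) · x j ≥ r`. -/
def kcClosure {n m : ℕ} (A : Matrix (Fin m) (Fin n) ℝ) (b : Fin m → ℝ)
    (J : Finset (Fin n)) (u : Fin n → ℝ) : Set (Fin n → ℝ) :=
  {x | x ∈ coverLP A b J u ∧ ∀ (i : Fin m) (S : Finset (Fin n)), S ⊆ J →
    0 < b i - ∑ j ∈ S, A i j * u j →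
    b i - ∑ j ∈ S, A i j * u j
      ≤ ∑ j ∈ Finset.univ \ S, min (A i j) (b i - ∑ j' ∈ S, A i j' * u j') * x j}


noncomputable def fracSet {n : ℕ} (z : Fin n → ℝ) : Finset (Fin n) :=
  @Finset.filter _ (fun j => ¬ ∃ k : ℤ, z j = (k : ℝ)) (Classical.decPred _) Finset.univ

lemma mem_fracSet {n : ℕ} {z : Fin n → ℝ} {j : Fin n} :
    j ∈ fracSet z ↔ ¬ ∃ k : ℤ, z j = (k : ℝ) := by
  simp [fracSet]

lemma isIntPt_of_fracSet_empty {n : ℕ} {z : Fin n → ℝ} (h : fracSet z = ∅) : isIntPt z := by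
  intro j
  by_contra hj
  have : j ∈ fracSet z := mem_fracSet.2 hj
  simp [h] at this

lemma dotp_update {n : ℕ} (g x : Fin n → ℝ) (k : Fin n) (c : ℝ) :
    dotp g (Function.update x k c) = dotp g x + g k * (c - x k) := by
  unfold dotp
  have h : (fun j => g j * Function.update x k c j)
      = Function.update (fun j => g j * x j) k (g k * c) := by
    funext j
    by_cases hj : j = k
    · subst hj; simp
    · simp [Function.update_of_ne hj]
  rw [h, Finset.sum_update_of_mem (Finset.mem_univ k)]
  rw [← Finset.add_sum_erase _ _ (Finset.mem_univ k), Finset.erase_eq]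
  ring

lemma fracSet_update_subset {n : ℕ} (z : Fin n → ℝ) (k : Fin n) (c : ℤ) :
    fracSet (Function.update z k (c : ℝ)) ⊆ (fracSet z).erase k := by
  intro j hj
  rw [mem_fracSet] at hj
  by_cases hjk : j = k
  · subst hjk; simp at hj
  · rw [Function.update_of_ne hjk] at hj
    exact Finset.mem_erase.2 ⟨hjk, mem_fracSet.2 hj⟩

lemma split_mem {n : ℕ} {V : Set (Fin n → ℝ)} {z a b : Fin n → ℝ} {θ : ℝ}
    (hθ0 : 0 ≤ θ) (hθ1 : θ ≤ 1) (hzab : z = θ • a + (1-θ) • b)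
    (ha : a ∈ convexHull ℝ V) (hb : b ∈ convexHull ℝ V) : z ∈ convexHull ℝ V := by
  rw [hzab]
  exact (convex_convexHull ℝ V) ha hb hθ0 (by linarith) (by ring)

lemma frac_lt {x : ℝ} (h : ¬ ∃ k : ℤ, x = (k : ℝ)) :
    ((⌊x⌋ : ℝ) < x) ∧ (x < (⌈x⌉ : ℝ)) ∧ ((⌈x⌉ : ℝ) = (⌊x⌋ : ℝ) + 1) := by
  have h1 : (⌊x⌋ : ℝ) ≤ x := Int.floor_le x
  have h2 : x ≤ (⌈x⌉ : ℝ) := Int.le_ceil x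
  have h3 : (⌊x⌋ : ℝ) ≠ x := fun he => h ⟨⌊x⌋, he.symm⟩
  have h4 : x ≠ (⌈x⌉ : ℝ) := fun he => h ⟨⌈x⌉, he⟩
  have h5 : (⌊x⌋ : ℝ) < x := lt_of_le_of_ne h1 h3
  have h6 : x < (⌈x⌉ : ℝ) := lt_of_le_of_ne h2 h4
  refine ⟨h5, h6, ?_⟩
  have h7 : ⌈x⌉ ≤ ⌊x⌋ + 1 := Int.ceil_le_floor_add_one x
  have h8 : ⌊x⌋ < ⌈x⌉ := by
    have := h5.trans h6
    exact_mod_cast this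
  have : ⌈x⌉ = ⌊x⌋ + 1 := by omega
  rw [this]; push_cast; ring

lemma split_fc {n : ℕ} (z : Fin n → ℝ) (k : Fin n) (hfk : ¬ ∃ m : ℤ, z k = (m : ℝ)) :
    z = ((⌈z k⌉ : ℝ) - z k) • Function.update z k ((⌊z k⌋ : ℤ) : ℝ)
      + (1 - ((⌈z k⌉ : ℝ) - z k)) • Function.update z k ((⌈z k⌉ : ℤ) : ℝ) := by
  obtain ⟨h5, h6, h7⟩ := frac_lt hfk
  funext j
  by_cases hj : j = k
  · subst hj
    simp only [Pi.add_apply, Pi.smul_apply, Function.update_self, smul_eq_mul]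
    rw [h7]; ring
  · simp only [Pi.add_apply, Pi.smul_apply, Function.update_of_ne hj, smul_eq_mul]
    ring

/-- Core pipage-rounding lemma. -/
lemma core {n : ℕ} (g : Fin n → ℝ) (r s : ℝ) (hs : 0 ≤ s)
    (hg : ∀ j, 0 ≤ g j) (hgs : ∀ j, g j ≤ s) (lo hi : Fin n → ℤ) :
    ∀ N (z : Fin n → ℝ), (fracSet z).card ≤ N →
    (∀ j, (lo j : ℝ) ≤ z j ∧ z j ≤ (hi j : ℝ)) → r + s ≤ dotp g z →
    z ∈ convexHull ℝ {ζ : Fin n → ℝ | isIntPt ζ ∧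
      (∀ j, (lo j : ℝ) ≤ ζ j ∧ ζ j ≤ (hi j : ℝ)) ∧ r ≤ dotp g ζ} := by
  intro N
  induction N with
  | zero =>
    intro z hcard hbox hz
    have he : fracSet z = ∅ := Finset.card_eq_zero.1 (Nat.le_zero.1 hcard)
    exact subset_convexHull ℝ _ ⟨isIntPt_of_fracSet_empty he, hbox, by linarith⟩
  | succ N ih =>
    intro z hcard hbox hz
    by_cases hFe : fracSet z = ∅
    · exact subset_convexHull ℝ _ ⟨isIntPt_of_fracSet_empty hFe, hbox, by linarith⟩
    obtain ⟨k, hk⟩ := Finset.nonempty_iff_ne_empty.2 hFe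
    have hfk : ¬ ∃ m : ℤ, z k = (m : ℝ) := mem_fracSet.1 hk
    obtain ⟨hk5, hk6, hk7⟩ := frac_lt hfk
    -- bounds on the integers floor/ceil of z k relative to lo/hi
    have hlok : (lo k : ℝ) ≤ (⌊z k⌋ : ℝ) := by
      exact_mod_cast Int.le_floor.2 (hbox k).1
    have hhik : ((⌈z k⌉ : ℤ) : ℝ) ≤ (hi k : ℝ) := by
      exact_mod_cast Int.ceil_le.2 (hbox k).2
    -- generic bounds for updated functions
    have boxupd : ∀ (c : ℝ), (lo k : ℝ) ≤ c → c ≤ (hi k : ℝ) →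
        ∀ j, (lo j : ℝ) ≤ Function.update z k c j ∧ Function.update z k c j ≤ (hi j : ℝ) := by
      intro c hc1 hc2 j
      by_cases hj : j = k
      · subst hj; simp [hc1, hc2]
      · rw [Function.update_of_ne hj]; exact hbox j
    have cardupd : ∀ (c : ℤ), (fracSet (Function.update z k (c : ℝ))).card ≤ N := by
      intro c
      have h1 := Finset.card_le_card (fracSet_update_subset z k c)
      have h2 : ((fracSet z).erase k).card = (fracSet z).card - 1 :=
        Finset.card_erase_of_mem hk
      omega
    by_cases hone : fracSet z = {k}
    · -- single fractional coordinate: split directly into two integer points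
      have hint : ∀ (c : ℤ), isIntPt (Function.update z k (c : ℝ)) := by
        intro c j
        by_cases hj : j = k
        · subst hj; exact ⟨c, by simp⟩
        · rw [Function.update_of_ne hj]
          by_contra hcon
          have : j ∈ fracSet z := mem_fracSet.2 (by push_neg at hcon ⊢; exact hcon)
          rw [hone] at this
          simp at this
          exact hj this
      refine split_mem (θ := (⌈z k⌉ : ℝ) - z k) (by linarith) (by linarith)
        (split_fc z k hfk) (subset_convexHull ℝ _ ?_) (subset_convexHull ℝ _ ?_)
      · refine ⟨hint _, boxupd _ (by linarith) (by linarith), ?_⟩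
        rw [dotp_update]
        have h1 : g k * ((⌊z k⌋ : ℝ) - z k) ≥ -s := by nlinarith [hg k, hgs k]
        linarith
      · refine ⟨hint _, boxupd _ (by linarith) hhik, ?_⟩
        rw [dotp_update]
        nlinarith [hg k]
    -- there is another fractional coordinate j ≠ k
    have hexj : ∃ j ∈ fracSet z, j ≠ k := by
      by_contra hcon
      push_neg at hcon
      exact hone (Finset.eq_singleton_iff_unique_mem.2 ⟨hk, hcon⟩)
    obtain ⟨j, hj, hjk⟩ := hexj
    have hfj : ¬ ∃ m : ℤ, z j = (m : ℝ) := mem_fracSet.1 hj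
    obtain ⟨hj5, hj6, hj7⟩ := frac_lt hfj
    have hloj : (lo j : ℝ) ≤ (⌊z j⌋ : ℝ) := by
      exact_mod_cast Int.le_floor.2 (hbox j).1
    have hhij : ((⌈z j⌉ : ℤ) : ℝ) ≤ (hi j : ℝ) := by
      exact_mod_cast Int.ceil_le.2 (hbox j).2
    -- helper: splitting at a zero-coefficient fractional coordinate, via IH
    have zerosplit : ∀ l ∈ fracSet z, g l = 0 →
        z ∈ convexHull ℝ {ζ : Fin n → ℝ | isIntPt ζ ∧
          (∀ j, (lo j : ℝ) ≤ ζ j ∧ ζ j ≤ (hi j : ℝ)) ∧ r ≤ dotp g ζ} := by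
      intro l hl hgl
      have hfl : ¬ ∃ m : ℤ, z l = (m : ℝ) := mem_fracSet.1 hl
      obtain ⟨hl5, hl6, hl7⟩ := frac_lt hfl
      have hlol : (lo l : ℝ) ≤ (⌊z l⌋ : ℝ) := by
        exact_mod_cast Int.le_floor.2 (hbox l).1
      have hhil : ((⌈z l⌉ : ℤ) : ℝ) ≤ (hi l : ℝ) := by
        exact_mod_cast Int.ceil_le.2 (hbox l).2
      have cardupdl : ∀ (c : ℤ), (fracSet (Function.update z l (c : ℝ))).card ≤ N := by
        intro c
        have h1 := Finset.card_le_card (fracSet_update_subset z l c)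
        have h2 : ((fracSet z).erase l).card = (fracSet z).card - 1 :=
          Finset.card_erase_of_mem hl
        omega
      have boxupdl : ∀ (c : ℝ), (lo l : ℝ) ≤ c → c ≤ (hi l : ℝ) →
          ∀ j, (lo j : ℝ) ≤ Function.update z l c j ∧ Function.update z l c j ≤ (hi j : ℝ) := by
        intro c hc1 hc2 j'
        by_cases hj' : j' = l
        · subst hj'; simp [hc1, hc2]
        · rw [Function.update_of_ne hj']; exact hbox j'
      refine split_mem (θ := (⌈z l⌉ : ℝ) - z l) (by linarith) (by linarith)
        (split_fc z l hfl) ?_ ?_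
      · refine ih _ (cardupdl _) (boxupdl _ (by linarith) (by linarith)) ?_
        rw [dotp_update, hgl]; linarith
      · refine ih _ (cardupdl _) (boxupdl _ (by linarith) hhil) ?_
        rw [dotp_update, hgl]; linarith
    by_cases hgj0 : g j = 0
    · exact zerosplit j hj hgj0
    by_cases hgk0 : g k = 0
    · exact zerosplit k hk hgk0
    have hgj : 0 < g j := lt_of_le_of_ne (hg j) (Ne.symm hgj0)
    have hgk : 0 < g k := lt_of_le_of_ne (hg k) (Ne.symm hgk0)
    -- pipage step
    set t1 : ℝ := min (((⌈z j⌉ : ℝ) - z j) / g k) ((z k - (⌊z k⌋ : ℝ)) / g j) with ht1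
    set t2 : ℝ := min ((z j - (⌊z j⌋ : ℝ)) / g k) (((⌈z k⌉ : ℝ) - z k) / g j) with ht2
    have ht1pos : 0 < t1 := lt_min (div_pos (by linarith) hgk) (div_pos (by linarith) hgj)
    have ht2pos : 0 < t2 := lt_min (div_pos (by linarith) hgk) (div_pos (by linarith) hgj)
    set a : Fin n → ℝ := Function.update (Function.update z j (z j + t1 * g k)) k (z k - t1 * g j) with ha
    set b : Fin n → ℝ := Function.update (Function.update z j (z j - t2 * g k)) k (z k + t2 * g j) with hb
    have haj : a j = z j + t1 * g k := by
      rw [ha, Function.update_of_ne hjk, Function.update_self]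
    have hak : a k = z k - t1 * g j := by rw [ha, Function.update_self]
    have hbj : b j = z j - t2 * g k := by
      rw [hb, Function.update_of_ne hjk, Function.update_self]
    have hbk : b k = z k + t2 * g j := by rw [hb, Function.update_self]
    have hao : ∀ l, l ≠ j → l ≠ k → a l = z l := by
      intro l hl1 hl2
      rw [ha, Function.update_of_ne hl2, Function.update_of_ne hl1]
    have hbo : ∀ l, l ≠ j → l ≠ k → b l = z l := by
      intro l hl1 hl2
      rw [hb, Function.update_of_ne hl2, Function.update_of_ne hl1]
    -- bound facts
    have ht1a : t1 * g k ≤ (⌈z j⌉ : ℝ) - z j := by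
      calc t1 * g k ≤ (((⌈z j⌉ : ℝ) - z j) / g k) * g k :=
            mul_le_mul_of_nonneg_right (min_le_left _ _) hgk.le
        _ = (⌈z j⌉ : ℝ) - z j := by field_simp
    have ht1b : t1 * g j ≤ z k - (⌊z k⌋ : ℝ) := by
      calc t1 * g j ≤ ((z k - (⌊z k⌋ : ℝ)) / g j) * g j :=
            mul_le_mul_of_nonneg_right (min_le_right _ _) hgj.le
        _ = z k - (⌊z k⌋ : ℝ) := by field_simp
    have ht2a : t2 * g k ≤ z j - (⌊z j⌋ : ℝ) := by
      calc t2 * g k ≤ ((z j - (⌊z j⌋ : ℝ)) / g k) * g k :=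
            mul_le_mul_of_nonneg_right (min_le_left _ _) hgk.le
        _ = z j - (⌊z j⌋ : ℝ) := by field_simp
    have ht2b : t2 * g j ≤ (⌈z k⌉ : ℝ) - z k := by
      calc t2 * g j ≤ (((⌈z k⌉ : ℝ) - z k) / g j) * g j :=
            mul_le_mul_of_nonneg_right (min_le_right _ _) hgj.le
        _ = (⌈z k⌉ : ℝ) - z k := by field_simp
    -- boxes
    have hboxa : ∀ l, (lo l : ℝ) ≤ a l ∧ a l ≤ (hi l : ℝ) := by
      intro l
      by_cases hl1 : l = j
      · rw [hl1, haj]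
        constructor
        · linarith [(hbox j).1, mul_pos ht1pos hgk]
        · linarith [ht1a, hhij]
      by_cases hl2 : l = k
      · rw [hl2, hak]
        constructor
        · linarith [ht1b, hlok]
        · linarith [(hbox k).2, mul_pos ht1pos hgj]
      · rw [hao l hl1 hl2]; exact hbox l
    have hboxb : ∀ l, (lo l : ℝ) ≤ b l ∧ b l ≤ (hi l : ℝ) := by
      intro l
      by_cases hl1 : l = j
      · rw [hl1, hbj]
        constructor
        · linarith [ht2a, hloj]
        · linarith [(hbox j).2, mul_pos ht2pos hgk]
      by_cases hl2 : l = k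
      · rw [hl2, hbk]
        constructor
        · linarith [(hbox k).1, mul_pos ht2pos hgj]
        · linarith [ht2b, hhik]
      · rw [hbo l hl1 hl2]; exact hbox l
    -- dotp preserved
    have hdpa : dotp g a = dotp g z := by
      rw [ha, dotp_update, dotp_update, Function.update_of_ne (Ne.symm hjk)]
      ring
    have hdpb : dotp g b = dotp g z := by
      rw [hb, dotp_update, dotp_update, Function.update_of_ne (Ne.symm hjk)]
      ring
    -- fracSet cards
    have hsub : ∀ (w : Fin n → ℝ), (∀ l, l ≠ j → l ≠ k → w l = z l) →
        ((∃ m : ℤ, w j = (m : ℝ)) ∨ (∃ m : ℤ, w k = (m : ℝ))) →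
        (fracSet w).card ≤ N := by
      intro w hwo hwjk
      rcases hwjk with hw | hw
      · have : fracSet w ⊆ (fracSet z).erase j := by
          intro l hl
          rw [mem_fracSet] at hl
          by_cases hl1 : l = j
          · subst hl1; exact absurd hw hl
          by_cases hl2 : l = k
          · subst hl2; exact Finset.mem_erase.2 ⟨hl1, hk⟩
          · rw [hwo l hl1 hl2] at hl
            exact Finset.mem_erase.2 ⟨hl1, mem_fracSet.2 hl⟩
        have h1 := Finset.card_le_card this
        have h2 : ((fracSet z).erase j).card = (fracSet z).card - 1 :=
          Finset.card_erase_of_mem hj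
        omega
      · have : fracSet w ⊆ (fracSet z).erase k := by
          intro l hl
          rw [mem_fracSet] at hl
          by_cases hl2 : l = k
          · subst hl2; exact absurd hw hl
          by_cases hl1 : l = j
          · subst hl1; exact Finset.mem_erase.2 ⟨hl2, hj⟩
          · rw [hwo l hl1 hl2] at hl
            exact Finset.mem_erase.2 ⟨hl2, mem_fracSet.2 hl⟩
        have h1 := Finset.card_le_card this
        have h2 : ((fracSet z).erase k).card = (fracSet z).card - 1 :=
          Finset.card_erase_of_mem hk
        omega
    have hinta : (∃ m : ℤ, a j = (m : ℝ)) ∨ (∃ m : ℤ, a k = (m : ℝ)) := by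
      rcases min_cases (((⌈z j⌉ : ℝ) - z j) / g k) ((z k - (⌊z k⌋ : ℝ)) / g j) with
        ⟨he, _⟩ | ⟨he, _⟩
      · left; refine ⟨⌈z j⌉, ?_⟩
        rw [haj, ht1, he]; field_simp; ring
      · right; refine ⟨⌊z k⌋, ?_⟩
        rw [hak, ht1, he]; field_simp; ring
    have hintb : (∃ m : ℤ, b j = (m : ℝ)) ∨ (∃ m : ℤ, b k = (m : ℝ)) := by
      rcases min_cases ((z j - (⌊z j⌋ : ℝ)) / g k) (((⌈z k⌉ : ℝ) - z k) / g j) with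
        ⟨he, _⟩ | ⟨he, _⟩
      · left; refine ⟨⌊z j⌋, ?_⟩
        rw [hbj, ht2, he]; field_simp; ring
      · right; refine ⟨⌈z k⌉, ?_⟩
        rw [hbk, ht2, he]; field_simp; ring
    -- the convex combination
    have hcomb : z = (t2 / (t1 + t2)) • a + (1 - t2 / (t1 + t2)) • b := by
      have hts : 0 < t1 + t2 := by linarith
      have h1mt : 1 - t2 / (t1 + t2) = t1 / (t1 + t2) := by field_simp; ring
      rw [h1mt]
      funext l
      by_cases hl1 : l = j
      · subst hl1
        simp only [Pi.add_apply, Pi.smul_apply, smul_eq_mul, haj, hbj]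
        field_simp; ring
      by_cases hl2 : l = k
      · subst hl2
        simp only [Pi.add_apply, Pi.smul_apply, smul_eq_mul, hak, hbk]
        field_simp; ring
      · simp only [Pi.add_apply, Pi.smul_apply, smul_eq_mul, hao l hl1 hl2, hbo l hl1 hl2]
        field_simp
        ring
    refine split_mem (θ := t2 / (t1 + t2)) (by positivity)
      (by rw [div_le_one (by linarith)]; linarith) hcomb ?_ ?_
    · exact ih _ (hsub a hao hinta) hboxa (by rw [hdpa]; exact hz)
    · exact ih _ (hsub b hbo hintb) hboxb (by rw [hdpb]; exact hz)

lemma min_scale {a r R : ℝ} (ha : 0 ≤ a) (h1 : 0 < r) (h2 : r ≤ R) :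
    r / R * min a R ≤ min a r := by
  have hR : 0 < R := h1.trans_le h2
  rcases le_total a r with h | h
  · rw [min_eq_left h, min_eq_left (h.trans h2)]
    rw [div_mul_eq_mul_div, div_le_iff₀ hR]
    nlinarith
  · rw [min_eq_right h]
    rcases le_total a R with h' | h'
    · rw [min_eq_left h']
      rw [div_mul_eq_mul_div, div_le_iff₀ hR]
      nlinarith
    · rw [min_eq_right h', div_mul_cancel₀ _ hR.ne']

/-- The knapsack-cover inequalities for an aggregated row follow from those of the rows. -/
lemma aggKC {n m : ℕ} (A : Matrix (Fin m) (Fin n) ℝ) (b : Fin m → ℝ)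
    (J : Finset (Fin n)) (u : Fin n → ℝ) (hA : ∀ i j, 0 ≤ A i j)
    (x : Fin n → ℝ) (hx0 : ∀ j, 0 ≤ x j)
    (hkc : ∀ (i : Fin m) (S : Finset (Fin n)), S ⊆ J →
      0 < b i - ∑ j ∈ S, A i j * u j →
      b i - ∑ j ∈ S, A i j * u j
        ≤ ∑ j ∈ Finset.univ \ S, min (A i j) (b i - ∑ j' ∈ S, A i j' * u j') * x j)
    (lam : Fin m → ℝ) (hlam : ∀ i, 0 ≤ lam i) (S : Finset (Fin n)) (hS : S ⊆ J)
    (hr : 0 < (∑ i, lam i * b i) - ∑ j ∈ S, (∑ i, lam i * A i j) * u j) :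
    (∑ i, lam i * b i) - ∑ j ∈ S, (∑ i, lam i * A i j) * u j
      ≤ ∑ j ∈ Finset.univ \ S,
          min (∑ i, lam i * A i j)
            ((∑ i, lam i * b i) - ∑ j' ∈ S, (∑ i, lam i * A i j') * u j') * x j := by
  set r : ℝ := (∑ i, lam i * b i) - ∑ j ∈ S, (∑ i, lam i * A i j) * u j with hrdef
  set svec : Fin m → ℝ := fun i => max (b i - ∑ j ∈ S, A i j * u j) 0 with hsvec
  have hsnn : ∀ i, 0 ≤ svec i := fun i => le_max_right _ _
  have hsi : ∀ i, svec i ≤ ∑ j ∈ Finset.univ \ S, min (A i j) (svec i) * x j := by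
    intro i
    by_cases hp : 0 < b i - ∑ j ∈ S, A i j * u j
    · have h1 := hkc i S hS hp
      have h2 : svec i = b i - ∑ j ∈ S, A i j * u j := max_eq_left hp.le
      rw [h2]
      exact h1
    · push_neg at hp
      have h2 : svec i = 0 := max_eq_right hp
      rw [h2]
      apply Finset.sum_nonneg
      intro j _
      rw [min_eq_right (hA i j), zero_mul]
  set R : ℝ := ∑ i, lam i * svec i with hRdef
  have hrswap : r = ∑ i, lam i * (b i - ∑ j ∈ S, A i j * u j) := by
    have h1 : ∑ j ∈ S, (∑ i, lam i * A i j) * u j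
        = ∑ i, lam i * ∑ j ∈ S, A i j * u j := by
      simp only [Finset.sum_mul, Finset.mul_sum]
      rw [Finset.sum_comm]
      apply Finset.sum_congr rfl
      intro j _
      apply Finset.sum_congr rfl
      intro i _
      ring
    rw [hrdef, h1, ← Finset.sum_sub_distrib]
    apply Finset.sum_congr rfl
    intro i _
    ring
  have hrR : r ≤ R := by
    rw [hrswap, hRdef]
    exact Finset.sum_le_sum fun i _ =>
      mul_le_mul_of_nonneg_left (le_max_left _ _) (hlam i)
  have hRpos : 0 < R := lt_of_lt_of_le hr hrR
  have hR2 : R ≤ ∑ j ∈ Finset.univ \ S, min (∑ i, lam i * A i j) R * x j := by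
    have step1 : R ≤ ∑ i, lam i * ∑ j ∈ Finset.univ \ S, min (A i j) (svec i) * x j := by
      rw [hRdef]
      exact Finset.sum_le_sum fun i _ => mul_le_mul_of_nonneg_left (hsi i) (hlam i)
    have step2 : ∑ i, lam i * ∑ j ∈ Finset.univ \ S, min (A i j) (svec i) * x j
        = ∑ j ∈ Finset.univ \ S, (∑ i, lam i * min (A i j) (svec i)) * x j := by
      simp only [Finset.mul_sum, Finset.sum_mul]
      rw [Finset.sum_comm]
      apply Finset.sum_congr rfl
      intro j _
      apply Finset.sum_congr rfl
      intro i _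
      ring
    have step3 : ∑ j ∈ Finset.univ \ S, (∑ i, lam i * min (A i j) (svec i)) * x j
        ≤ ∑ j ∈ Finset.univ \ S, min (∑ i, lam i * A i j) R * x j := by
      apply Finset.sum_le_sum
      intro j _
      apply mul_le_mul_of_nonneg_right _ (hx0 j)
      apply le_min
      · exact Finset.sum_le_sum fun i _ =>
          mul_le_mul_of_nonneg_left (min_le_left _ _) (hlam i)
      · rw [hRdef]
        exact Finset.sum_le_sum fun i _ =>
          mul_le_mul_of_nonneg_left (min_le_right _ _) (hlam i)
    calc R ≤ _ := step1
      _ = _ := step2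
      _ ≤ _ := step3
  have habar : ∀ j, 0 ≤ ∑ i, lam i * A i j := fun j =>
    Finset.sum_nonneg fun i _ => mul_nonneg (hlam i) (hA i j)
  calc r = (r / R) * R := by field_simp
    _ ≤ (r / R) * ∑ j ∈ Finset.univ \ S, min (∑ i, lam i * A i j) R * x j := by
        apply mul_le_mul_of_nonneg_left hR2
        positivity
    _ = ∑ j ∈ Finset.univ \ S, (r / R * min (∑ i, lam i * A i j) R) * x j := by
        rw [Finset.mul_sum]
        apply Finset.sum_congr rfl
        intro j _
        ring
    _ ≤ ∑ j ∈ Finset.univ \ S, min (∑ i, lam i * A i j) r * x j := by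
        apply Finset.sum_le_sum
        intro j _
        exact mul_le_mul_of_nonneg_right (min_scale (habar j) hr hrR) (hx0 j)

/-- Single aggregated row: the doubled truncated point is in the convex hull of the
integer points of the knapsack. -/
lemma single_row {n : ℕ} (J : Finset (Fin n)) (u : Fin n → ℝ)
    (hu : ∀ j ∈ J, ∃ z : ℕ, u j = (z : ℝ))
    (abar : Fin n → ℝ) (bbar : ℝ) (habar : ∀ j, 0 ≤ abar j)
    (x : Fin n → ℝ) (hx0 : ∀ j, 0 ≤ x j) (hxu : ∀ j ∈ J, x j ≤ u j)
    (hkcbar : ∀ S : Finset (Fin n), S ⊆ J → 0 < bbar - ∑ j ∈ S, abar j * u j →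
      bbar - ∑ j ∈ S, abar j * u j
        ≤ ∑ j ∈ Finset.univ \ S, min (abar j) (bbar - ∑ j' ∈ S, abar j' * u j') * x j) :
    (fun j => if j ∈ J then min (2 * x j) (u j) else 2 * x j) ∈
      convexHull ℝ {z : Fin n → ℝ | (∀ j, 0 ≤ z j) ∧ isIntPt z ∧ (∀ j ∈ J, z j ≤ u j) ∧
        bbar ≤ dotp abar z} := by
  classical
  set y : Fin n → ℝ := fun j => if j ∈ J then min (2 * x j) (u j) else 2 * x j with hy
  set S : Finset (Fin n) := J.filter (fun j => u j ≤ 2 * x j) with hSdef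
  have hSJ : S ⊆ J := Finset.filter_subset _ _
  set r : ℝ := bbar - ∑ j ∈ S, abar j * u j with hrdef
  have hyS : ∀ j ∈ S, y j = u j := by
    intro j hj
    have hjJ : j ∈ J := hSJ hj
    have h2 : u j ≤ 2 * x j := (Finset.mem_filter.1 hj).2
    simp only [hy, if_pos hjJ]
    exact min_eq_right h2
  have hyNS : ∀ j, j ∉ S → y j = 2 * x j := by
    intro j hj
    by_cases hjJ : j ∈ J
    · have h2 : ¬ u j ≤ 2 * x j := fun hcon => hj (Finset.mem_filter.2 ⟨hjJ, hcon⟩)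
      simp only [hy, if_pos hjJ]
      exact min_eq_left (le_of_lt (lt_of_not_ge h2))
    · simp only [hy, if_neg hjJ]
  have hy0 : ∀ j, 0 ≤ y j := by
    intro j
    by_cases hjJ : j ∈ J
    · simp only [hy, if_pos hjJ]
      exact le_min (by linarith [hx0 j]) (le_trans (hx0 j) (hxu j hjJ))
    · simp only [hy, if_neg hjJ]
      linarith [hx0 j]
  have hyu : ∀ j ∈ J, y j ≤ u j := by
    intro j hj
    simp only [hy, if_pos hj]
    exact min_le_right _ _
  have hbox : ∀ j, ((⌊y j⌋ : ℝ) ≤ y j) ∧ (y j ≤ (⌈y j⌉ : ℝ)) :=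
    fun j => ⟨Int.floor_le _, Int.le_ceil _⟩
  have hcardy : (fracSet y).card ≤ n := le_trans (Finset.card_le_univ _) (by simp)
  -- common facts about members of the box
  have hmem_nonneg : ∀ (ζ : Fin n → ℝ),
      (∀ j, ((⌊y j⌋ : ℝ) ≤ ζ j) ∧ (ζ j ≤ (⌈y j⌉ : ℝ))) → ∀ j, 0 ≤ ζ j := by
    intro ζ hζ j
    have h1 : (0 : ℝ) ≤ ((⌊y j⌋ : ℤ) : ℝ) := by
      exact_mod_cast Int.floor_nonneg.2 (hy0 j)
    linarith [(hζ j).1]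
  have hmem_ub : ∀ (ζ : Fin n → ℝ),
      (∀ j, ((⌊y j⌋ : ℝ) ≤ ζ j) ∧ (ζ j ≤ (⌈y j⌉ : ℝ))) → ∀ j ∈ J, ζ j ≤ u j := by
    intro ζ hζ j hj
    obtain ⟨zu, hzu⟩ := hu j hj
    have h1 : y j ≤ ((zu : ℤ) : ℝ) := by
      push_cast
      rw [← hzu]
      exact hyu j hj
    have h2 : ((⌈y j⌉ : ℤ) : ℝ) ≤ ((zu : ℤ) : ℝ) := by
      exact_mod_cast Int.ceil_le.2 h1
    have := (hζ j).2
    rw [hzu]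
    push_cast at h2 ⊢
    linarith
  have hζS : ∀ (ζ : Fin n → ℝ),
      (∀ j, ((⌊y j⌋ : ℝ) ≤ ζ j) ∧ (ζ j ≤ (⌈y j⌉ : ℝ))) → ∀ j ∈ S, ζ j = u j := by
    intro ζ hζ j hj
    obtain ⟨zu, hzu⟩ := hu j (hSJ hj)
    have hyj : y j = u j := hyS j hj
    have hfl : ((⌊y j⌋ : ℤ) : ℝ) = u j := by
      rw [hyj, hzu]
      push_cast
      norm_num
    have hcl : ((⌈y j⌉ : ℤ) : ℝ) = u j := by
      rw [hyj, hzu]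
      push_cast
      norm_num
    have := (hζ j).1
    have := (hζ j).2
    rw [hfl] at *
    rw [hcl] at *
    linarith [(hζ j).1, (hζ j).2]
  by_cases hr : 0 < r
  · -- nontrivial residual: use the KC inequality for S
    set g : Fin n → ℝ := fun j => if j ∈ S then (0 : ℝ) else min (abar j) r with hgdef
    have hg0 : ∀ j, 0 ≤ g j := by
      intro j
      simp only [hgdef]
      split
      · exact le_rfl
      · exact le_min (habar j) hr.le
    have hgs : ∀ j, g j ≤ r := by
      intro j
      simp only [hgdef]
      split
      · exact hr.le
      · exact min_le_right _ _
    have hsplit : dotp g y = ∑ j ∈ Finset.univ \ S, min (abar j) r * y j := by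
      unfold dotp
      rw [← Finset.sum_sdiff (Finset.subset_univ S)]
      have h1 : ∑ j ∈ S, g j * y j = 0 := by
        apply Finset.sum_eq_zero
        intro j hj
        simp only [hgdef, if_pos hj, zero_mul]
      have h2 : ∑ j ∈ Finset.univ \ S, g j * y j
          = ∑ j ∈ Finset.univ \ S, min (abar j) r * y j := by
        apply Finset.sum_congr rfl
        intro j hj
        have hjS : j ∉ S := (Finset.mem_sdiff.1 hj).2
        simp only [hgdef, if_neg hjS]
      rw [h1, h2]
      ring
    have hzval : r + r ≤ dotp g y := by
      rw [hsplit]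
      have heq : ∑ j ∈ Finset.univ \ S, min (abar j) r * y j
          = 2 * ∑ j ∈ Finset.univ \ S, min (abar j) r * x j := by
        rw [Finset.mul_sum]
        apply Finset.sum_congr rfl
        intro j hj
        rw [hyNS j (Finset.mem_sdiff.1 hj).2]
        ring
      rw [heq]
      linarith [hkcbar S hSJ hr]
    have hcore := core g r r hr.le hg0 hgs (fun j => ⌊y j⌋) (fun j => ⌈y j⌉)
      n y hcardy hbox hzval
    refine convexHull_mono ?_ hcore
    rintro ζ ⟨hint, hζbox, hdp⟩
    refine ⟨hmem_nonneg ζ hζbox, hint, hmem_ub ζ hζbox, ?_⟩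
    have hζnn : ∀ j, 0 ≤ ζ j := hmem_nonneg ζ hζbox
    have hd1 : dotp abar ζ = ∑ j ∈ Finset.univ \ S, abar j * ζ j + ∑ j ∈ S, abar j * ζ j := by
      unfold dotp
      rw [← Finset.sum_sdiff (Finset.subset_univ S)]
    have hd2 : ∑ j ∈ S, abar j * ζ j = ∑ j ∈ S, abar j * u j := by
      apply Finset.sum_congr rfl
      intro j hj
      rw [hζS ζ hζbox j hj]
    have hd3 : ∑ j ∈ Finset.univ \ S, g j * ζ j = dotp g ζ := by
      unfold dotp
      rw [← Finset.sum_sdiff (Finset.subset_univ S)]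
      have h1 : ∑ j ∈ S, g j * ζ j = 0 := by
        apply Finset.sum_eq_zero
        intro j hj
        simp only [hgdef, if_pos hj, zero_mul]
      rw [h1]
      ring
    have hd4 : ∑ j ∈ Finset.univ \ S, g j * ζ j ≤ ∑ j ∈ Finset.univ \ S, abar j * ζ j := by
      apply Finset.sum_le_sum
      intro j hj
      have hjS : j ∉ S := (Finset.mem_sdiff.1 hj).2
      apply mul_le_mul_of_nonneg_right _ (hζnn j)
      simp only [hgdef, if_neg hjS]
      exact min_le_left _ _
    rw [hd1, hd2]
    have : r ≤ dotp g ζ := hdp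
    linarith [hd3, hd4]
  · -- trivial residual
    push_neg at hr
    have hzval : (0 : ℝ) + 0 ≤ dotp (fun _ : Fin n => (0 : ℝ)) y := by
      unfold dotp
      simp
    have hcore := core (fun _ : Fin n => (0 : ℝ)) 0 0 le_rfl (fun _ => le_rfl)
      (fun _ => le_rfl) (fun j => ⌊y j⌋) (fun j => ⌈y j⌉) n y hcardy hbox hzval
    refine convexHull_mono ?_ hcore
    rintro ζ ⟨hint, hζbox, _⟩
    refine ⟨hmem_nonneg ζ hζbox, hint, hmem_ub ζ hζbox, ?_⟩
    have hζnn : ∀ j, 0 ≤ ζ j := hmem_nonneg ζ hζbox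
    have hd2 : ∑ j ∈ S, abar j * ζ j = ∑ j ∈ S, abar j * u j := by
      apply Finset.sum_congr rfl
      intro j hj
      rw [hζS ζ hζbox j hj]
    have hd5 : ∑ j ∈ S, abar j * ζ j ≤ dotp abar ζ := by
      unfold dotp
      apply Finset.sum_le_sum_of_subset_of_nonneg (Finset.subset_univ S)
      intro j _ _
      exact mul_nonneg (habar j) (hζnn j)
    linarith [hd2, hd5]

/-- For a covering polyhedron with bounds
`Q = {x : 0 ≤ x ≤ u, Ax ≥ b}` (bounds on coordinates in `J`), the knapsack-cover closure
`KC(Q)` is a 2-approximation of the aggregation closure `𝒜(Q)`. -/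
theorem stmt17 {n m : ℕ} (A : Matrix (Fin m) (Fin n) ℝ) (b : Fin m → ℝ)
    (J : Finset (Fin n)) (u : Fin n → ℝ)
    (hA : ∀ i j, 0 ≤ A i j) (hb : ∀ i, 0 ≤ b i)
    (hAq : ∀ i j, ∃ q : ℚ, A i j = (q : ℝ)) (hbq : ∀ i, ∃ q : ℚ, b i = (q : ℝ))
    (hu : ∀ j ∈ J, ∃ z : ℕ, u j = (z : ℝ))
    (c : Fin n → ℝ) (hc : ∀ j, 0 ≤ c j) :
    ((1 / 2 : ℝ) : EReal) * infVal c (aggC A b J u) ≤ infVal c (kcClosure A b J u) := by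
  rw [show infVal c (kcClosure A b J u) = ⨅ x ∈ kcClosure A b J u, ((dotp c x : ℝ) : EReal)
    from rfl]
  refine le_iInf₂ fun x hx => ?_
  have hx0 : ∀ j, 0 ≤ x j := hx.1.1
  have hxu : ∀ j ∈ J, x j ≤ u j := hx.1.2.1
  set y : Fin n → ℝ := fun j => if j ∈ J then min (2 * x j) (u j) else 2 * x j with hy
  have hy_mem : y ∈ aggC A b J u := by
    rw [aggC, Set.mem_iInter]
    intro lam
    exact single_row J u hu _ _
      (fun j => Finset.sum_nonneg fun i _ => mul_nonneg (lam.2 i) (hA i j))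
      x hx0 hxu
      (fun S hS hpos => aggKC A b J u hA x hx0 hx.2 lam.1 lam.2 S hS hpos)
  have h1 : infVal c (aggC A b J u) ≤ ((dotp c y : ℝ) : EReal) := iInf₂_le y hy_mem
  have h2 : dotp c y ≤ 2 * dotp c x := by
    unfold dotp
    rw [Finset.mul_sum]
    apply Finset.sum_le_sum
    intro j _
    have hyj : y j ≤ 2 * x j := by
      by_cases hj : j ∈ J
      · simp only [hy, if_pos hj]
        exact min_le_left _ _
      · simp only [hy, if_neg hj]
        exact le_refl _
    calc c j * y j ≤ c j * (2 * x j) := mul_le_mul_of_nonneg_left hyj (hc j)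
      _ = 2 * (c j * x j) := by ring
  generalize hval : infVal c (aggC A b J u) = a at h1 ⊢
  induction a using EReal.rec with
  | bot =>
    rw [EReal.mul_bot_of_pos (EReal.coe_pos.2 (by norm_num))]
    exact bot_le
  | coe t =>
    rw [← EReal.coe_mul]
    refine EReal.coe_le_coe_iff.2 ?_
    have ht := EReal.coe_le_coe_iff.1 h1
    linarith
  | top => exact absurd h1 (not_le.2 (EReal.coe_lt_top _))
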